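/- Let R > 0 and suppose R0 > 0 satisfies R0^2 - R ≥ 2R0 and R0 ≥ 2. Then for every sequence ω = (c_0, c_1, ...) with all c_n in D(0,R) and every z with |z| > R0, the limit g_ω(z) = lim_{n→∞} 2^{-n} ln|f^n_ω(z)| exists. -/

import Mathlib

open Metric Complex Filter

/-- The quadratic polynomial `f_c(z) = z^2 + c`. -/
noncomputable def fc (c z : ℂ) : ℂ := z ^ 2 + c

/-- The non-autonomous orbit: `orbitC ω z n = f_{ω(n-1)} ∘ ... ∘ f_{ω 0} (z)`. -/
noncomputable def orbitC (ω : ℕ → ℂ) (z : ℂ) : ℕ → ℂ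
  | 0 => z
  | n + 1 => fc (ω n) (orbitC ω z n)

/-- Let `R > 0` and suppose `R0 > 0` satisfies `R0^2 - R ≥ 2 R0` and `R0 ≥ 2`. Then for
every parameter sequence `ω` with all entries in `D(0,R)` and every `z` with `|z| > R0`,
the limit `g_ω(z) = lim_{n→∞} 2^{-n} ln |f^n_ω(z)|` exists. -/
theorem stmt2 (R R0 : ℝ) (hR : 0 < R) (hR0 : 0 < R0)
    (h1 : R0 ^ 2 - R ≥ 2 * R0) (h2 : R0 ≥ 2)
    (ω : ℕ → ℂ) (hω : ∀ n, ‖ω n‖ < R)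
    (z : ℂ) (hz : ‖z‖ > R0) :
    ∃ g : ℝ, Tendsto (fun n : ℕ => Real.log ‖orbitC ω z n‖ / 2 ^ n)
      atTop (nhds g) := by
  set ε : ℝ := R / R0 ^ 2 with hεdef
  have hε0 : 0 < ε := by positivity
  have hε1 : ε < 1 := by
    rw [hεdef, div_lt_one (by positivity)]
    nlinarith
  have h1ε : (0:ℝ) < 1 - ε := by linarith
  have hRε : R = ε * R0 ^ 2 := by rw [hεdef, div_mul_cancel₀ R (by positivity)]
  set A : ℕ → ℝ := fun n => ‖orbitC ω z n‖ with hA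
  have hApos : ∀ n, R0 < A n := by
    intro n
    induction n with
    | zero => simpa [hA, orbitC] using hz
    | succ n ih =>
      have hc := (hω n).le
      have hlow : A n ^ 2 - ‖ω n‖ ≤ A (n + 1) := by
        have h := norm_add_le (orbitC ω z n ^ 2 + ω n) (-(ω n))
        simp only [add_neg_cancel_right, norm_neg, map_pow] at h
        simpa [hA, orbitC, fc] using h
      nlinarith
  have hbound : ∀ n, (1 - ε) * A n ^ 2 ≤ A (n + 1) ∧ A (n + 1) ≤ (1 + ε) * A n ^ 2 := by
    intro n
    have hc := (hω n).le
    have hAn := hApos n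
    have hlow : A n ^ 2 - ‖ω n‖ ≤ A (n + 1) := by
      have h := norm_add_le (orbitC ω z n ^ 2 + ω n) (-(ω n))
      simp only [add_neg_cancel_right, norm_neg, map_pow] at h
      simpa [hA, orbitC, fc] using h
    have hhigh : A (n + 1) ≤ A n ^ 2 + ‖ω n‖ := by
      have h := norm_add_le (orbitC ω z n ^ 2) (ω n)
      simpa [hA, orbitC, fc, map_pow] using h
    have hsq : R0 ^ 2 ≤ A n ^ 2 := by nlinarith
    have hRA : R ≤ ε * A n ^ 2 := by
      rw [hRε]
      exact mul_le_mul_of_nonneg_left hsq hε0.le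
    constructor <;> nlinarith
  set C : ℝ := -Real.log (1 - ε) with hC
  have hdn : ∀ n, |Real.log (A (n + 1)) - 2 * Real.log (A n)| ≤ C := by
    intro n
    have hAn : 0 < A n := lt_trans hR0 (hApos n)
    have hAn1 : 0 < A (n + 1) := lt_trans hR0 (hApos (n + 1))
    obtain ⟨hl, hh⟩ := hbound n
    have hlog1 : Real.log ((1 - ε) * A n ^ 2) ≤ Real.log (A (n + 1)) :=
      Real.log_le_log (by positivity) hl
    have hlog2 : Real.log (A (n + 1)) ≤ Real.log ((1 + ε) * A n ^ 2) :=
      Real.log_le_log hAn1 hh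
    rw [Real.log_mul (ne_of_gt h1ε) (by positivity), Real.log_pow] at hlog1
    rw [Real.log_mul (by positivity) (by positivity), Real.log_pow] at hlog2
    have e1 : Real.log (1 - ε) ≤ -ε := by
      have := Real.log_le_sub_one_of_pos h1ε
      linarith
    have e2 : Real.log (1 + ε) ≤ ε := by
      have := Real.log_le_sub_one_of_pos (by linarith : (0:ℝ) < 1 + ε)
      linarith
    rw [abs_le]
    push_cast at hlog1 hlog2
    constructor <;> [linarith; linarith]
  have hcauchy : CauchySeq (fun n : ℕ => Real.log (A n) / 2 ^ n) := by
    apply cauchySeq_of_le_geometric (1/2) (C/2) (by norm_num)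
    intro n
    rw [Real.dist_eq]
    have hne : ((2:ℝ) ^ (n + 1)) ≠ 0 := by positivity
    have key : Real.log (A n) / 2 ^ n - Real.log (A (n + 1)) / 2 ^ (n + 1)
        = -(Real.log (A (n + 1)) - 2 * Real.log (A n)) / 2 ^ (n + 1) := by
      field_simp
      ring
    rw [key, abs_div, abs_neg, abs_of_pos (by positivity : (0:ℝ) < (2:ℝ) ^ (n + 1))]
    rw [div_le_iff₀ (by positivity)]
    calc |Real.log (A (n + 1)) - 2 * Real.log (A n)| ≤ C := hdn n
      _ = C / 2 * (1 / 2) ^ n * 2 ^ (n + 1) := by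
          have h2 : ((1:ℝ) / 2) ^ n * 2 ^ n = 1 := by
            rw [← mul_pow]; norm_num
          rw [pow_succ]
          linear_combination (-C) * h2
  exact cauchySeq_tendsto_of_complete hcauchy
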